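/- (Topologically transitive criterion) Let T be a bounded linear operator on a complex Banach space X (not necessarily separable). Suppose there exists a strictly increasing sequence of positive integers (n_k) for which there are: (1) a dense subset X₀ ⊆ X such that T^{n_k} x → 0 for every x ∈ X₀; (2) a dense subset Y₀ ⊆ X and a sequence of mappings S_k : Y₀ → X such that (a) S_k y → 0 for every y ∈ Y₀ and (b) T^{n_k} S_k y → y for every y ∈ Y₀. Then T is topologically transitive. -/
import Mathlib


open Filter Topology

/-- A bounded linear operator `T` on a complex Banach space `X` is topologically transitive
if for every pair `U, V` of nonempty open subsets of `X` there is a positive integer `n`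
with `T^n(U) ∩ V ≠ ∅`. -/
def TopologicallyTransitive {X : Type*} [NormedAddCommGroup X] [NormedSpace ℂ X]
    (T : X →L[ℂ] X) : Prop :=
  ∀ U V : Set X, IsOpen U → IsOpen V → U.Nonempty → V.Nonempty →
    ∃ n : ℕ, 0 < n ∧ ((T ^ n) '' U ∩ V).Nonempty

/-- **Topologically transitive criterion.**  Let `T` be a bounded linear operator on a complex
Banach space `X` (not necessarily separable).  Suppose there is a strictly increasing sequence
of positive integers `(n_k)` for which there are: (1) a dense subset `X₀ ⊆ X` with
`T^{n_k} x → 0` for every `x ∈ X₀`; (2) a dense subset `Y₀ ⊆ X` and maps `S_k : Y₀ → X` with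
`S_k y → 0` and `T^{n_k} (S_k y) → y` for every `y ∈ Y₀`.  Then `T` is topologically
transitive. -/
theorem topologicallyTransitive_of_criterion
    (X : Type*) [NormedAddCommGroup X] [NormedSpace ℂ X] [CompleteSpace X]
    (T : X →L[ℂ] X)
    (n : ℕ → ℕ) (hpos : ∀ k, 0 < n k) (hmono : StrictMono n)
    (X₀ : Set X) (hX₀ : Dense X₀)
    (hX₀lim : ∀ x ∈ X₀, Tendsto (fun k => (T ^ n k) x) atTop (𝓝 0))
    (Y₀ : Set X) (hY₀ : Dense Y₀)
    (S : ℕ → Y₀ → X)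
    (hSlim : ∀ y : Y₀, Tendsto (fun k => S k y) atTop (𝓝 0))
    (hTS : ∀ y : Y₀, Tendsto (fun k => (T ^ n k) (S k y)) atTop (𝓝 (y : X))) :
    TopologicallyTransitive T := by
  intro U V hU hV hUne hVne
  obtain ⟨x, hxX₀, hxU⟩ := hX₀.exists_mem_open hU hUne
  obtain ⟨y, hyY₀, hyV⟩ := hY₀.exists_mem_open hV hVne
  set yy : Y₀ := ⟨y, hyY₀⟩
  -- z_k = x + S_k y tends to x
  have hz : Tendsto (fun k => x + S k yy) atTop (𝓝 x) := by
    simpa using tendsto_const_nhds.add (hSlim yy)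
  have hTz : Tendsto (fun k => (T ^ n k) (x + S k yy)) atTop (𝓝 y) := by
    have : Tendsto (fun k => (T ^ n k) x + (T ^ n k) (S k yy)) atTop (𝓝 (0 + y)) :=
      (hX₀lim x hxX₀).add (hTS yy)
    simpa [map_add] using this
  have h1 : ∀ᶠ k in atTop, x + S k yy ∈ U := hz.eventually (hU.mem_nhds hxU)
  have h2 : ∀ᶠ k in atTop, (T ^ n k) (x + S k yy) ∈ V := hTz.eventually (hV.mem_nhds hyV)
  obtain ⟨k, hk1, hk2⟩ := (h1.and h2).exists
  exact ⟨n k, hpos k, (T ^ n k) (x + S k yy), ⟨⟨_, hk1, rfl⟩, hk2⟩⟩
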